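/- (Differentiability of the principal part, special case) Let G : ℝ^N → ℝ be an admissible G-function that is additionally continuously differentiable, with gradient ∇G, and let I ⊂ ℝ be a bounded nondegenerate interval. Let v, w ∈ L^G(I,ℝ^N). Then for every s ∈ ℝ the integral ∫_I G(v(t) + s·w(t)) dt is finite, the function t ↦ ⟨∇G(v(t)), w(t)⟩ is integrable on I, and the map ψ : ℝ → ℝ, ψ(s) = ∫_I G(v(t) + s·w(t)) dt, is differentiable at s = 0 with ψ'(0) = ∫_I ⟨∇G(v(t)), w(t)⟩ dt. (Applied with v = u̇ and w = φ̇ this gives the directional derivative of the action functional I(u) = ∫_I G(u̇) dt on the Orlicz–Sobolev space in the direction φ.) -/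

import Mathlib

open MeasureTheory Filter Set

noncomputable section

abbrev Euc (N : ℕ) := EuclideanSpace ℝ (Fin N)

/-- Admissible G-function: (G1)-(G6). -/
def IsGFunction {N : ℕ} (G : Euc N → ℝ) : Prop :=
  G 0 = 0 ∧
  ConvexOn ℝ Set.univ G ∧
  (∀ x, G (-x) = G x) ∧
  (∀ C : ℝ, ∃ R : ℝ, ∀ x : Euc N, R ≤ ‖x‖ → C * ‖x‖ ≤ G x) ∧
  (∃ K₁ : ℝ, 2 ≤ K₁ ∧ ∃ M₁ : ℝ, 0 < M₁ ∧ ∀ x : Euc N, M₁ ≤ ‖x‖ → G ((2:ℝ) • x) ≤ K₁ * G x) ∧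
  (∃ K₂ : ℝ, 1 ≤ K₂ ∧ ∃ M₂ : ℝ, 0 < M₂ ∧ ∀ x : Euc N, M₂ ≤ ‖x‖ → G x ≤ (1/(2*K₂)) * G (K₂ • x))

/-- Membership in the anisotropic Orlicz space L^G(I, ℝ^N). -/
def MemLG {N : ℕ} (G : Euc N → ℝ) (I : Set ℝ) (u : ℝ → Euc N) : Prop :=
  AEStronglyMeasurable u (volume.restrict I) ∧ IntegrableOn (fun t => G (u t)) I

/-- Luxemburg norm. -/
def luxNorm {N : ℕ} (G : Euc N → ℝ) (I : Set ℝ) (u : ℝ → Euc N) : ℝ :=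
  sInf {α : ℝ | 0 < α ∧ (∫ t in I, G (α⁻¹ • u t)) ≤ 1}

/-- Modular. -/
def modular {N : ℕ} (G : Euc N → ℝ) (I : Set ℝ) (u : ℝ → Euc N) : ℝ :=
  ∫ t in I, G (u t)

/-- Fenchel conjugate. -/
def fenchelConj {N : ℕ} (G : Euc N → ℝ) (y : Euc N) : ℝ :=
  ⨆ x : Euc N, ((inner ℝ x y : ℝ) - G x)


section Aux

variable {N : ℕ} {G : Euc N → ℝ}

lemma G_nonneg (h0 : G 0 = 0) (hconv : ConvexOn ℝ Set.univ G)
    (heven : ∀ x, G (-x) = G x) (x : Euc N) : 0 ≤ G x := by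
  have h := hconv.2 (mem_univ x) (mem_univ (-x))
    (by norm_num : (0:ℝ) ≤ 1/2) (by norm_num : (0:ℝ) ≤ 1/2) (by norm_num)
  have hx : (1/2 : ℝ) • x + (1/2 : ℝ) • (-x) = 0 := by module
  rw [hx, h0, heven] at h
  simp only [smul_eq_mul] at h
  linarith

lemma G_seg (h0 : G 0 = 0) (hconv : ConvexOn ℝ Set.univ G)
    (heven : ∀ x, G (-x) = G x) (x y : Euc N) {r c : ℝ} (hc : 0 < c) (hr : |r| ≤ c) :
    G (x + r • y) ≤ G (x + c • y) + G (x + (-c) • y) := by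
  set θ : ℝ := (c + r) / (2 * c) with hθ
  set η : ℝ := (c - r) / (2 * c) with hη
  have hr1 : -c ≤ r := (abs_le.mp hr).1
  have hr2 : r ≤ c := (abs_le.mp hr).2
  have hθ0 : 0 ≤ θ := div_nonneg (by linarith) (by linarith)
  have hη0 : 0 ≤ η := div_nonneg (by linarith) (by linarith)
  have hθη : θ + η = 1 := by
    rw [hθ, hη, ← add_div, div_eq_one_iff_eq (by positivity)]; ring
  have key : θ • (x + c • y) + η • (x + (-c) • y) = x + r • y := by
    have h1 : θ * c + η * (-c) = r := by
      rw [hθ, hη, div_mul_eq_mul_div, div_mul_eq_mul_div, ← add_div, div_eq_iff (by positivity)]; ring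
    have h2 : θ • (x + c • y) + η • (x + (-c) • y)
        = (θ + η) • x + (θ * c + η * (-c)) • y := by module
    rw [h2, hθη, h1, one_smul]
  have h := hconv.2 (mem_univ (x + c • y)) (mem_univ (x + (-c) • y)) hθ0 hη0 hθη
  rw [key] at h
  simp only [smul_eq_mul] at h
  have n1 := G_nonneg h0 hconv heven (x + c • y)
  have n2 := G_nonneg h0 hconv heven (x + (-c) • y)
  have hθ1 : θ ≤ 1 := by linarith
  have hη1 : η ≤ 1 := by linarith
  nlinarith

lemma G_double (h0 : G 0 = 0) (hconv : ConvexOn ℝ Set.univ G)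
    (heven : ∀ x, G (-x) = G x) (hGc : Continuous G)
    (hΔ : ∃ K₁ : ℝ, 2 ≤ K₁ ∧ ∃ M₁ : ℝ, 0 < M₁ ∧
      ∀ x : Euc N, M₁ ≤ ‖x‖ → G ((2:ℝ) • x) ≤ K₁ * G x) :
    ∃ K C : ℝ, 0 ≤ K ∧ 0 ≤ C ∧ ∀ x : Euc N, G ((2:ℝ) • x) ≤ K * G x + C := by
  obtain ⟨K₁, hK₁, M₁, hM₁, hΔ⟩ := hΔ
  obtain ⟨z, hz, hzmax⟩ := (isCompact_closedBall (0 : Euc N) (2 * M₁)).exists_isMaxOn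
    ⟨0, by simp [le_of_lt, hM₁, mul_nonneg]⟩ hGc.continuousOn
  refine ⟨K₁, G z, by linarith, G_nonneg h0 hconv heven z, fun x => ?_⟩
  rcases le_or_gt M₁ ‖x‖ with h | h
  · have := hΔ x h
    have := G_nonneg h0 hconv heven z
    linarith
  · have h2 : (2:ℝ) • x ∈ Metric.closedBall (0 : Euc N) (2 * M₁) := by
      simp only [Metric.mem_closedBall, dist_zero_right, norm_smul, Real.norm_ofNat]
      nlinarith [norm_nonneg x]
    have : G ((2:ℝ) • x) ≤ G z := hzmax h2
    have := G_nonneg h0 hconv heven x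
    nlinarith

lemma G_pow (h0 : G 0 = 0) (hconv : ConvexOn ℝ Set.univ G)
    (heven : ∀ x, G (-x) = G x) (hGc : Continuous G)
    (hΔ : ∃ K₁ : ℝ, 2 ≤ K₁ ∧ ∃ M₁ : ℝ, 0 < M₁ ∧
      ∀ x : Euc N, M₁ ≤ ‖x‖ → G ((2:ℝ) • x) ≤ K₁ * G x) (n : ℕ) :
    ∃ K C : ℝ, 0 ≤ K ∧ 0 ≤ C ∧ ∀ x : Euc N, G ((2:ℝ)^n • x) ≤ K * G x + C := by
  obtain ⟨K₀, C₀, hK₀, hC₀, hd⟩ := G_double h0 hconv heven hGc hΔ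
  induction n with
  | zero => exact ⟨1, 0, zero_le_one, le_refl 0, fun x => by simp⟩
  | succ n ih =>
    obtain ⟨K, C, hK, hC, hb⟩ := ih
    refine ⟨K₀ * K, K₀ * C + C₀, by positivity, by positivity, fun x => ?_⟩
    have h1 : ((2:ℝ)^(n+1)) • x = (2:ℝ) • ((2:ℝ)^n • x) := by
      rw [smul_smul]; ring_nf
    rw [h1]
    calc G ((2:ℝ) • ((2:ℝ)^n • x)) ≤ K₀ * G ((2:ℝ)^n • x) + C₀ := hd _
    _ ≤ K₀ * (K * G x + C) + C₀ := by nlinarith [hb x]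
    _ = K₀ * K * G x + (K₀ * C + C₀) := by ring

/-- For every `s` there are constants with `G (s • x) ≤ K * G x + C`. -/
lemma G_scale (h0 : G 0 = 0) (hconv : ConvexOn ℝ Set.univ G)
    (heven : ∀ x, G (-x) = G x) (hGc : Continuous G)
    (hΔ : ∃ K₁ : ℝ, 2 ≤ K₁ ∧ ∃ M₁ : ℝ, 0 < M₁ ∧
      ∀ x : Euc N, M₁ ≤ ‖x‖ → G ((2:ℝ) • x) ≤ K₁ * G x) (s : ℝ) :
    ∃ K C : ℝ, 0 ≤ K ∧ 0 ≤ C ∧ ∀ x : Euc N, G (s • x) ≤ K * G x + C := by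
  obtain ⟨n, hn⟩ := pow_unbounded_of_one_lt |s| (by norm_num : (1:ℝ) < 2)
  obtain ⟨K, C, hK, hC, hb⟩ := G_pow h0 hconv heven hGc hΔ n
  refine ⟨2 * K, 2 * C, by positivity, by positivity, fun x => ?_⟩
  have hseg := G_seg h0 hconv heven 0 x (c := (2:ℝ)^n) (by positivity) hn.le
  have he : G ((0:Euc N) + (-(2:ℝ)^n) • x) = G ((0:Euc N) + (2:ℝ)^n • x) := by
    rw [zero_add, zero_add, neg_smul, heven]
  rw [zero_add, he, zero_add] at hseg
  have := hb x
  nlinarith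

/-- Subadditivity-type bound: `G (x + y) ≤ K * (G x + G y) + C`. -/
lemma G_add (h0 : G 0 = 0) (hconv : ConvexOn ℝ Set.univ G)
    (heven : ∀ x, G (-x) = G x) (hGc : Continuous G)
    (hΔ : ∃ K₁ : ℝ, 2 ≤ K₁ ∧ ∃ M₁ : ℝ, 0 < M₁ ∧
      ∀ x : Euc N, M₁ ≤ ‖x‖ → G ((2:ℝ) • x) ≤ K₁ * G x) :
    ∃ K C : ℝ, 0 ≤ K ∧ 0 ≤ C ∧ ∀ x y : Euc N, G (x + y) ≤ K * (G x + G y) + C := by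
  obtain ⟨K₀, C₀, hK₀, hC₀, hd⟩ := G_double h0 hconv heven hGc hΔ
  refine ⟨K₀, C₀, hK₀, hC₀, fun x y => ?_⟩
  have hmid : x + y = (2:ℝ) • ((1/2 : ℝ) • x + (1/2 : ℝ) • y) := by module
  have hcv := hconv.2 (mem_univ x) (mem_univ y)
    (by norm_num : (0:ℝ) ≤ 1/2) (by norm_num : (0:ℝ) ≤ 1/2) (by norm_num)
  calc G (x + y) = G ((2:ℝ) • ((1/2 : ℝ) • x + (1/2 : ℝ) • y)) := by rw [← hmid]
  _ ≤ K₀ * G ((1/2 : ℝ) • x + (1/2 : ℝ) • y) + C₀ := hd _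
  _ ≤ K₀ * ((1/2) * G x + (1/2) * G y) + C₀ := by
      simp only [smul_eq_mul] at hcv; nlinarith
  _ ≤ K₀ * (G x + G y) + C₀ := by
      have := G_nonneg h0 hconv heven x
      have := G_nonneg h0 hconv heven y
      nlinarith

end Aux

section Grad

variable {N : ℕ} {G : Euc N → ℝ} {G' : Euc N → Euc N}

lemma chain_hasDerivAt (hG' : ∀ x, HasGradientAt G (G' x) x) (x y : Euc N) (s : ℝ) :
    HasDerivAt (fun r : ℝ => G (x + r • y)) (inner ℝ (G' (x + s • y)) y : ℝ) s := by
  have hc : HasDerivAt (fun r : ℝ => x + r • y) y s := by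
    simpa using ((hasDerivAt_id s).smul_const y).const_add x
  have hg := (hG' (x + s • y)).hasFDerivAt
  have := hg.comp_hasDerivAt s hc
  simp [InnerProductSpace.toDual_apply_apply] at this
  exact this

lemma line_convex (hconv : ConvexOn ℝ Set.univ G) (x y : Euc N) :
    ConvexOn ℝ Set.univ (fun r : ℝ => G (x + r • y)) := by
  have h := hconv.comp_affineMap (AffineMap.lineMap x (x + y) : ℝ →ᵃ[ℝ] Euc N)
  have he : (G ∘ (AffineMap.lineMap x (x + y) : ℝ →ᵃ[ℝ] Euc N)) =
      fun r : ℝ => G (x + r • y) := by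
    funext r
    simp only [Function.comp_apply, AffineMap.lineMap_apply_module]
    congr 1
    module
  rwa [he, Set.preimage_univ] at h

lemma grad_le_sub (hconv : ConvexOn ℝ Set.univ G)
    (hG' : ∀ x, HasGradientAt G (G' x) x) (x y : Euc N) :
    (inner ℝ (G' x) y : ℝ) ≤ G (x + y) - G x := by
  have hφ := line_convex hconv x y
  have hd : HasDerivAt (fun r : ℝ => G (x + r • y)) (inner ℝ (G' x) y : ℝ) 0 := by
    simpa using chain_hasDerivAt hG' x y 0
  have := hφ.le_slope_of_hasDerivAt (mem_univ (0:ℝ)) (mem_univ (1:ℝ)) one_pos hd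
  simpa [slope_def_field] using this

lemma grad_abs_le (h0 : G 0 = 0) (hconv : ConvexOn ℝ Set.univ G)
    (heven : ∀ x, G (-x) = G x)
    (hG' : ∀ x, HasGradientAt G (G' x) x) (x y : Euc N) :
    |(inner ℝ (G' x) y : ℝ)| ≤ G (x + y) + G (x + (-1:ℝ) • y) := by
  have n1 := G_nonneg h0 hconv heven (x + y)
  have n2 := G_nonneg h0 hconv heven (x + (-1:ℝ) • y)
  have n3 := G_nonneg h0 hconv heven x
  have h1 := grad_le_sub hconv hG' x y
  have h2 := grad_le_sub hconv hG' x (-y)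
  rw [inner_neg_right] at h2
  have hxy : x + -y = x + (-1:ℝ) • y := by module
  rw [hxy] at h2
  rw [abs_le]
  constructor <;> linarith

end Grad

/-- Differentiability of the principal part in the special case
F(t,x,v) = G(v): finiteness of the integrals, integrability of the derivative
integrand, and the directional derivative formula at s = 0. -/
theorem principal_part_special_case {N : ℕ} (hN : 1 ≤ N) (G : Euc N → ℝ)
    (hG : IsGFunction G) (G' : Euc N → Euc N)
    (hG' : ∀ x, HasGradientAt G (G' x) x) (hG'cont : Continuous G')
    (I : Set ℝ) (a b : ℝ) (hab : a < b) (hI1 : Ioo a b ⊆ I) (hI2 : I ⊆ Icc a b)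
    (v w : ℝ → Euc N) (hv : MemLG G I v) (hw : MemLG G I w) :
    (∀ s : ℝ, IntegrableOn (fun t => G (v t + s • w t)) I) ∧
    IntegrableOn (fun t => (inner ℝ (G' (v t)) (w t) : ℝ)) I ∧
    HasDerivAt (fun s : ℝ => ∫ t in I, G (v t + s • w t))
      (∫ t in I, (inner ℝ (G' (v t)) (w t) : ℝ)) 0 := by
  obtain ⟨h0, hconv, heven, -, hΔ, -⟩ := hG
  have hGc : Continuous G :=
    continuous_iff_continuousAt.mpr fun x => (hG' x).differentiableAt.continuousAt
  have hIfin : volume I < ⊤ :=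
    lt_of_le_of_lt (measure_mono hI2) (by rw [Real.volume_Icc]; exact ENNReal.ofReal_lt_top)
  have hmeas : ∀ s : ℝ, AEStronglyMeasurable (fun t => G (v t + s • w t))
      (volume.restrict I) := fun s =>
    hGc.comp_aestronglyMeasurable (hv.1.add (hw.1.const_smul s))
  -- Part 1
  have part1 : ∀ s : ℝ, IntegrableOn (fun t => G (v t + s • w t)) I := by
    intro s
    obtain ⟨K, C, hK, hC, hadd⟩ := G_add h0 hconv heven hGc hΔ
    obtain ⟨K', C', hK', hC', hsc⟩ := G_scale h0 hconv heven hGc hΔ s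
    have hconstInt : IntegrableOn (fun _ : ℝ => (K * C' + C : ℝ)) I :=
      integrableOn_const hIfin.ne
    have hboundInt : IntegrableOn
        (fun t => K * G (v t) + K * K' * G (w t) + (K * C' + C)) I :=
      ((hv.2.const_mul K).add (hw.2.const_mul (K * K'))).add hconstInt
    refine hboundInt.mono' (hmeas s) (Eventually.of_forall fun t => ?_)
    rw [Real.norm_eq_abs, abs_of_nonneg (G_nonneg h0 hconv heven _)]
    have h1 := hadd (v t) (s • w t)
    have h2 := hsc (w t)
    nlinarith [G_nonneg h0 hconv heven (w t), G_nonneg h0 hconv heven (v t)]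
  refine ⟨part1, ?_⟩
  -- dominated differentiation
  have hF'meas : AEStronglyMeasurable
      (fun t => (inner ℝ (G' (v t + (0:ℝ) • w t)) (w t) : ℝ)) (volume.restrict I) := by
    exact (hG'cont.comp_aestronglyMeasurable (hv.1.add (hw.1.fun_const_smul 0))).inner hw.1
  have hbound : ∀ t : ℝ, ∀ s ∈ Metric.ball (0:ℝ) 1,
      ‖(inner ℝ (G' (v t + s • w t)) (w t) : ℝ)‖ ≤
        2 * (G (v t + (2:ℝ) • w t) + G (v t + (-2:ℝ) • w t)) := by
    intro t s hs
    rw [Real.norm_eq_abs]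
    have hs1 : |s| < 1 := by simpa [Real.dist_eq] using hs
    have h := grad_abs_le h0 hconv heven hG' (v t + s • w t) (w t)
    have e1 : v t + s • w t + w t = v t + (s + 1) • w t := by module
    have e2 : v t + s • w t + (-1:ℝ) • w t = v t + (s - 1) • w t := by module
    rw [e1, e2] at h
    have b1 := G_seg h0 hconv heven (v t) (w t) (c := 2) two_pos
      (r := s + 1) (by rw [abs_le]; constructor <;> [linarith [abs_lt.mp hs1]; linarith [abs_lt.mp hs1]])
    have b2 := G_seg h0 hconv heven (v t) (w t) (c := 2) two_pos
      (r := s - 1) (by rw [abs_le]; constructor <;> [linarith [abs_lt.mp hs1]; linarith [abs_lt.mp hs1]])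
    linarith [b1, b2, h]
  have hdiff : ∀ t : ℝ, ∀ s ∈ Metric.ball (0:ℝ) 1,
      HasDerivAt (fun r : ℝ => G (v t + r • w t))
        (inner ℝ (G' (v t + s • w t)) (w t) : ℝ) s := fun t s _ =>
    chain_hasDerivAt hG' (v t) (w t) s
  obtain ⟨hint, hderiv⟩ := hasDerivAt_integral_of_dominated_loc_of_deriv_le
    (F := fun s t => G (v t + s • w t))
    (F' := fun s t => (inner ℝ (G' (v t + s • w t)) (w t) : ℝ))
    (bound := fun t => 2 * (G (v t + (2:ℝ) • w t) + G (v t + (-2:ℝ) • w t)))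
    (μ := volume.restrict I) (x₀ := 0) (Metric.ball_mem_nhds (0:ℝ) one_pos)
    (Eventually.of_forall hmeas) (part1 0) hF'meas
    (Eventually.of_forall hbound)
    (((part1 2).add (part1 (-2))).const_mul 2)
    (Eventually.of_forall hdiff)
  simp only [zero_smul, add_zero] at hint hderiv
  exact ⟨hint, hderiv⟩

end
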